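/- arXiv:2009.04937 — 2 statements merged into one kernel-verified Lean document; each statement's English description precedes it below -/
import Mathlib

section
/- Let ψ be an endomorphism of the free group F = F(a,b) and let M_ψ = ⟨a, b, t | t⁻¹at = ψ(a), t⁻¹bt = ψ(b)⟩ be its mapping torus. If there exist k ∈ ℤ \ {0} and w ∈ F \ {1} with ψ^k(w) conjugate to w in F, then M_ψ contains a subgroup isomorphic to ℤ × ℤ. -/
set_option linter.unusedSectionVars false

/-- Relations of the mapping torus of an endomorphism `ψ` of `F(a,b)`:
`t⁻¹ x t = ψ(x)` for each generator `x`, where `none` plays the role of `t`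
and `some x` the role of the generator `x` of `F(a,b)`. -/
def mappingTorusRels (ψ : FreeGroup Bool →* FreeGroup Bool) :
    Set (FreeGroup (Option Bool)) :=
  Set.range fun x : Bool =>
    (FreeGroup.of (none : Option Bool))⁻¹ * FreeGroup.of (some x) *
      FreeGroup.of (none : Option Bool) *
      (FreeGroup.map some (ψ (FreeGroup.of x)))⁻¹

/-- The mapping torus `M_ψ = ⟨a, b, t ∣ a^t = ψ(a), b^t = ψ(b)⟩`. -/
abbrev MappingTorus (ψ : FreeGroup Bool →* FreeGroup Bool) :=
  PresentedGroup (mappingTorusRels ψ)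

namespace MT9

section TorsionFree

open FreeGroup List

variable {α : Type*} [DecidableEq α]

/-- The non-cancellation relation on letters. -/
def NR (x y : α × Bool) : Prop := ¬(x.1 = y.1 ∧ x.2 = !y.2)

lemma reduce_eq_self_of_chain' {L : List (α × Bool)} (h : List.Chain' (NR) L) :
    FreeGroup.reduce L = L := by
  induction L with
  | nil => rfl
  | cons x tl ih =>
    rw [FreeGroup.reduce.cons, ih h.tail]
    cases tl with
    | nil => rfl
    | cons y t =>
      have hxy : NR x y := (List.isChain_cons_cons.1 h).1
      show (if x.1 = y.1 ∧ x.2 = !y.2 then t else x :: y :: t) = x :: y :: t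
      rw [if_neg hxy]

lemma chain'_reduce (L : List (α × Bool)) : List.Chain' (NR) (FreeGroup.reduce L) := by
  induction L with
  | nil => exact List.isChain_nil
  | cons x tl ih =>
    rw [FreeGroup.reduce.cons]
    cases h : FreeGroup.reduce tl with
    | nil => exact List.isChain_singleton x
    | cons y t =>
      rw [h] at ih
      show List.Chain' NR (if x.1 = y.1 ∧ x.2 = !y.2 then t else x :: y :: t)
      split_ifs with hc
      · exact ih.tail
      · exact List.isChain_cons_cons.2 ⟨hc, ih⟩

lemma chain'_toWord (x : FreeGroup α) : List.Chain' (NR) x.toWord := by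
  rw [← FreeGroup.reduce_toWord]
  exact chain'_reduce _

lemma chain'_flatten {L : List (α × Bool)} (h : List.Chain' NR L) (hne : L ≠ [])
    (hcyc : ∀ a ∈ L.getLast?, ∀ b ∈ L.head?, NR a b) (n : ℕ) :
    List.Chain' NR (List.flatten (List.replicate n L)) := by
  induction n with
  | zero => exact List.isChain_nil
  | succ n ih =>
    rw [List.replicate_succ, List.flatten_cons]
    refine List.isChain_append.2 ⟨h, ih, ?_⟩
    intro a ha b hb
    refine hcyc a ha b ?_
    cases n with
    | zero => simp at hb
    | succ m =>
      rw [List.replicate_succ, List.flatten_cons, List.head?_append] at hb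
      cases hh : L.head? with
      | none => exact absurd (List.head?_eq_none_iff.1 hh) hne
      | some c =>
        rw [hh] at hb
        simpa using hb

omit [DecidableEq α] in
lemma mk_pow (L : List (α × Bool)) (n : ℕ) :
    (FreeGroup.mk L) ^ n = FreeGroup.mk (List.flatten (List.replicate n L)) := by
  induction n with
  | zero =>
    simp [FreeGroup.one_eq_mk]
  | succ n ih =>
    rw [pow_succ', ih, List.replicate_succ, List.flatten_cons, FreeGroup.mul_mk]

omit [DecidableEq α] in
lemma flatten_replicate_ne_nil {L : List (α × Bool)} (hL : L ≠ []) {n : ℕ} (hn : n ≠ 0) :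
    List.flatten (List.replicate n L) ≠ [] := by
  cases n with
  | zero => exact absurd rfl hn
  | succ n =>
    rw [List.replicate_succ, List.flatten_cons]
    simp [hL]

lemma cyc_pow_ne_one (x : FreeGroup α) (hx : x ≠ 1)
    (hcyc : ∀ p ∈ x.toWord.getLast?, ∀ q ∈ x.toWord.head?, NR p q)
    {n : ℕ} (hn : n ≠ 0) : x ^ n ≠ 1 := by
  intro hone
  have hLne : x.toWord ≠ [] := fun h => hx (FreeGroup.toWord_eq_nil_iff.1 h)
  have h1 : x ^ n = FreeGroup.mk (List.flatten (List.replicate n x.toWord)) := by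
    rw [← mk_pow, FreeGroup.mk_toWord]
  have hred : (x ^ n).toWord = List.flatten (List.replicate n x.toWord) := by
    rw [h1, FreeGroup.toWord_mk,
      reduce_eq_self_of_chain' (chain'_flatten (chain'_toWord x) hLne hcyc n)]
  rw [hone, FreeGroup.toWord_one] at hred
  exact flatten_replicate_ne_nil hLne hn hred.symm

lemma pow_ne_one_aux : ∀ (N : ℕ) (x : FreeGroup α), x.norm ≤ N → x ≠ 1 →
    ∀ n : ℕ, n ≠ 0 → x ^ n ≠ 1 := by
  intro N
  induction N with
  | zero =>
    intro x hN hx n _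
    exact absurd (FreeGroup.norm_eq_zero.1 (Nat.le_zero.1 hN)) hx
  | succ N ihN =>
    intro x hN hx n hn
    have hLne : x.toWord ≠ [] := fun h => hx (FreeGroup.toWord_eq_nil_iff.1 h)
    have hchain := chain'_toWord x
    rcases hL : x.toWord with _ | ⟨a, tl⟩
    · exact absurd hL hLne
    rcases List.eq_nil_or_concat tl with rfl | ⟨M, d, rfl⟩
    · -- x = mk [a], cyclically reduced
      refine cyc_pow_ne_one x hx ?_ hn
      rw [hL]
      intro p hp q hq
      simp only [List.getLast?_singleton, List.head?_cons, Option.mem_def,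
        Option.some_inj] at hp hq
      subst hp; subst hq
      rintro ⟨-, h2⟩
      exact (Bool.not_ne_self a.2) h2.symm
    · rw [List.concat_eq_append] at hL
      by_cases hc : d.1 = a.1 ∧ d.2 = !a.2
      · -- cyclic cancellation : x = u * y * u⁻¹ with y shorter
        have hdd : d = (a.1, !a.2) := Prod.ext hc.1 hc.2
        rw [hL] at hchain
        have hMred : FreeGroup.reduce M = M := by
          refine reduce_eq_self_of_chain' (hchain.infix ?_)
          exact ⟨[a], [d], by simp⟩
        have hxeq : x = FreeGroup.mk [a] * FreeGroup.mk M * FreeGroup.mk [d] := by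
          rw [FreeGroup.mul_mk, FreeGroup.mul_mk, ← FreeGroup.mk_toWord (x := x), hL]
          simp
        have hinv : FreeGroup.mk [d] = (FreeGroup.mk [a])⁻¹ := by
          rw [FreeGroup.inv_mk]
          simp [FreeGroup.invRev, hdd]
        set u := FreeGroup.mk [a]
        set y := FreeGroup.mk M with hy
        have hxuy : x = u * y * u⁻¹ := by rw [hxeq, hinv]
        have hyne : y ≠ 1 := by
          intro h
          rw [h, mul_one] at hxuy
          exact hx (by rw [hxuy, mul_inv_cancel])
        have hnormy : y.norm ≤ N := by
          have h1 : y.norm = M.length := by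
            rw [FreeGroup.norm, FreeGroup.toWord_mk, hMred]
          have h2 : x.norm = M.length + 2 := by
            rw [FreeGroup.norm, hL]
            simp
          omega
        have := ihN y hnormy hyne n hn
        intro hone
        rw [hxuy, conj_pow] at hone
        exact this (by
          have : y ^ n = u⁻¹ * 1 * u := by rw [← hone]; group
          simpa using this)
      · -- cyclically reduced
        refine cyc_pow_ne_one x hx ?_ hn
        rw [hL]
        intro p hp q hq
        rw [show a :: (M ++ [d]) = (a :: M) ++ [d] from rfl, List.getLast?_concat] at hp
        simp only [List.head?_cons, Option.mem_def, Option.some_inj] at hp hq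
        subst hp; subst hq
        exact hc

lemma zpow_eq_zero {x : FreeGroup α} (hx : x ≠ 1) {n : ℤ} (h : x ^ n = 1) : n = 0 := by
  rcases n with m | m
  · simp only [Int.ofNat_eq_coe, zpow_natCast] at h
    by_contra hm
    exact pow_ne_one_aux x.norm x le_rfl hx m (by simpa using hm) h
  · rw [zpow_negSucc, inv_eq_one] at h
    exact absurd h (pow_ne_one_aux x.norm x le_rfl hx (m + 1) (Nat.succ_ne_zero m))


end TorsionFree

variable {G : Type*} [Group G] (ψ : Monoid.End G)

lemma endpow (a b : ℕ) (x : G) : (ψ ^ a) ((ψ ^ b) x) = (ψ ^ (a + b)) x := by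
  rw [pow_add]; rfl

lemma pcongr {a b : ℕ} (x : G) (h : a = b) : (ψ ^ a) x = (ψ ^ b) x := by rw [h]

lemma endpow_eq_of {a b : ℕ} {x y : G} (h : (ψ ^ a) x = (ψ ^ b) y) (r : ℕ) {c d : ℕ}
    (hc : c = r + a) (hd : d = r + b) : (ψ ^ c) x = (ψ ^ d) y := by
  subst hc; subst hd
  rw [← endpow, ← endpow, h]

/-- Setoid for the direct limit of `G --ψ--> G --ψ--> G --> ...`. -/
def colimSetoid : Setoid (G × ℕ) where
  r a b := ∃ p : ℕ, (ψ ^ (p + b.2)) a.1 = (ψ ^ (p + a.2)) b.1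
  iseqv := by
    constructor
    · exact fun a => ⟨0, rfl⟩
    · rintro a b ⟨p, h⟩; exact ⟨p, h.symm⟩
    · rintro ⟨x, m⟩ ⟨y, n⟩ ⟨z, q⟩ ⟨p, h⟩ ⟨p', h'⟩
      refine ⟨p + p' + n, ?_⟩
      have h1 := congrArg (ψ ^ (p' + q)) h
      rw [endpow, endpow] at h1
      have h2 := congrArg (ψ ^ (p + m)) h'
      rw [endpow, endpow] at h2
      calc (ψ ^ (p + p' + n + q)) x = (ψ ^ (p' + q + (p + n))) x := pcongr ψ x (by omega)
        _ = (ψ ^ (p' + q + (p + m))) y := h1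
        _ = (ψ ^ (p + m + (p' + q))) y := pcongr ψ y (by omega)
        _ = (ψ ^ (p + m + (p' + n))) z := h2
        _ = (ψ ^ (p + p' + n + m)) z := pcongr ψ z (by omega)

/-- The direct limit of `G --ψ--> G --ψ--> G --> ...`. -/
def Colim := Quotient (colimSetoid ψ)

namespace Colim

def mk (a : G × ℕ) : Colim ψ := Quotient.mk (colimSetoid ψ) a

lemma sound {a b : G × ℕ} (p : ℕ) (h : (ψ ^ (p + b.2)) a.1 = (ψ ^ (p + a.2)) b.1) :
    mk ψ a = mk ψ b := Quotient.sound ⟨p, h⟩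

lemma exact {a b : G × ℕ} (h : mk ψ a = mk ψ b) :
    ∃ p : ℕ, (ψ ^ (p + b.2)) a.1 = (ψ ^ (p + a.2)) b.1 := Quotient.exact h

instance : One (Colim ψ) := ⟨mk ψ (1, 0)⟩

instance : Mul (Colim ψ) :=
  ⟨Quotient.map₂ (fun a b => ((ψ ^ b.2) a.1 * (ψ ^ a.2) b.1, a.2 + b.2)) (by
    rintro ⟨x, m⟩ ⟨x', m'⟩ ⟨p, hp⟩ ⟨y, n⟩ ⟨y', n'⟩ ⟨q, hq⟩
    refine ⟨p + q, ?_⟩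
    simp only [map_mul, endpow]
    congr 1
    · exact endpow_eq_of ψ hp (q + n + n') (by omega) (by omega)
    · exact endpow_eq_of ψ hq (p + m + m') (by omega) (by omega))⟩

instance : Inv (Colim ψ) :=
  ⟨Quotient.map (fun a => (a.1⁻¹, a.2)) (by
    rintro ⟨x, m⟩ ⟨x', m'⟩ ⟨p, hp⟩
    exact ⟨p, by simp only [map_inv, hp]⟩)⟩

instance : Group (Colim ψ) where
  mul_assoc a b c := by
    induction a using Quotient.inductionOn with | _ a =>
    induction b using Quotient.inductionOn with | _ b =>
    induction c using Quotient.inductionOn with | _ c =>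
    obtain ⟨x, m⟩ := a; obtain ⟨y, n⟩ := b; obtain ⟨z, q⟩ := c
    apply Quotient.sound
    refine ⟨0, ?_⟩
    simp only [map_mul, endpow, mul_assoc]
    congr 1
    · exact pcongr ψ x (by omega)
    congr 1
    · exact pcongr ψ y (by omega)
    · exact pcongr ψ z (by omega)
  one_mul a := by
    induction a using Quotient.inductionOn with | _ a =>
    obtain ⟨x, m⟩ := a
    apply Quotient.sound
    refine ⟨0, ?_⟩
    simp
  mul_one a := by
    induction a using Quotient.inductionOn with | _ a =>
    obtain ⟨x, m⟩ := a
    apply Quotient.sound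
    refine ⟨0, ?_⟩
    simp
  inv_mul_cancel a := by
    induction a using Quotient.inductionOn with | _ a =>
    obtain ⟨x, m⟩ := a
    apply Quotient.sound
    refine ⟨0, ?_⟩
    simp [← map_mul]

lemma one_def : (1 : Colim ψ) = mk ψ (1, 0) := rfl

lemma mul_def (a b : G × ℕ) :
    mk ψ a * mk ψ b = mk ψ ((ψ ^ b.2) a.1 * (ψ ^ a.2) b.1, a.2 + b.2) := rfl

lemma inv_def (a : G × ℕ) : (mk ψ a)⁻¹ = mk ψ (a.1⁻¹, a.2) := rfl

/-- The canonical map `G →* Colim ψ` at level `0`. -/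
def j : G →* Colim ψ where
  toFun x := mk ψ (x, 0)
  map_one' := rfl
  map_mul' x y := by
    apply Quotient.sound
    refine ⟨0, ?_⟩
    simp

lemma j_apply (x : G) : j ψ x = mk ψ (x, 0) := rfl

lemma j_eq_one {x : G} (h : j ψ x = 1) : ∃ p : ℕ, (ψ ^ p) x = 1 := by
  obtain ⟨p, hp⟩ := exact ψ (h.trans (one_def ψ))
  exact ⟨p + 0, by simpa using hp⟩

/-- The shift automorphism of the direct limit. -/
def shift : Colim ψ ≃* Colim ψ where
  toFun := Quotient.map (fun a => (a.1, a.2 + 1)) (by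
    rintro ⟨x, m⟩ ⟨x', m'⟩ ⟨p, hp⟩
    refine ⟨p, ?_⟩
    show (ψ ^ (p + (m' + 1))) x = (ψ ^ (p + (m + 1))) x'
    exact endpow_eq_of ψ hp 1 (by omega) (by omega))
  invFun := Quotient.map (fun a => (ψ a.1, a.2)) (by
    rintro ⟨x, m⟩ ⟨x', m'⟩ ⟨p, hp⟩
    refine ⟨p + 1, ?_⟩
    show (ψ ^ (p + 1 + m')) (ψ x) = (ψ ^ (p + 1 + m)) (ψ x')
    have h1 : ψ x = (ψ ^ 1) x := by rw [pow_one]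
    have h2 : ψ x' = (ψ ^ 1) x' := by rw [pow_one]
    rw [h1, h2, endpow, endpow]
    exact endpow_eq_of ψ hp 2 (by omega) (by omega))
  left_inv a := by
    induction a using Quotient.inductionOn with | _ a =>
    obtain ⟨x, m⟩ := a
    apply Quotient.sound
    refine ⟨0, ?_⟩
    show (ψ ^ (0 + m)) (ψ x) = (ψ ^ (0 + (m + 1))) x
    have h1 : ψ x = (ψ ^ 1) x := by rw [pow_one]
    rw [h1, endpow]
    exact pcongr ψ x (by omega)
  right_inv a := by
    induction a using Quotient.inductionOn with | _ a =>
    obtain ⟨x, m⟩ := a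
    apply Quotient.sound
    refine ⟨0, ?_⟩
    show (ψ ^ (0 + m)) (ψ x) = (ψ ^ (0 + (m + 1))) x
    have h1 : ψ x = (ψ ^ 1) x := by rw [pow_one]
    rw [h1, endpow]
    exact pcongr ψ x (by omega)
  map_mul' a b := by
    induction a using Quotient.inductionOn with | _ a =>
    induction b using Quotient.inductionOn with | _ b =>
    obtain ⟨x, m⟩ := a; obtain ⟨y, n⟩ := b
    apply Quotient.sound
    refine ⟨0, ?_⟩
    simp only [map_mul, endpow]
    exact congrArg₂ (· * ·) (pcongr ψ x (by omega)) (pcongr ψ y (by omega))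

lemma shift_symm_j (x : G) : (shift ψ).symm (j ψ x) = j ψ (ψ x) := rfl

end Colim

section MT

open SemidirectProduct Multiplicative

variable (ψ : Monoid.End (FreeGroup Bool))

noncomputable def ι : FreeGroup Bool →* MappingTorus ψ :=
  (PresentedGroup.mk (mappingTorusRels ψ)).comp (FreeGroup.map some)

noncomputable def τ : MappingTorus ψ := PresentedGroup.of (rels := mappingTorusRels ψ) none

lemma hrel (g : FreeGroup Bool) : (τ ψ)⁻¹ * ι ψ g * τ ψ = ι ψ (ψ g) := by
  have hgen : ∀ x : Bool,
      ((MulAut.conj (τ ψ)⁻¹).toMonoidHom.comp (ι ψ)) (FreeGroup.of x)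
        = ((ι ψ).comp (ψ : FreeGroup Bool →* FreeGroup Bool)) (FreeGroup.of x) := by
    intro x
    have hr : PresentedGroup.mk (mappingTorusRels ψ)
        ((FreeGroup.of (none : Option Bool))⁻¹ * FreeGroup.of (some x) *
          FreeGroup.of (none : Option Bool) *
          (FreeGroup.map some (ψ (FreeGroup.of x)))⁻¹) = 1 := by
      apply (QuotientGroup.eq_one_iff _).2
      exact Subgroup.subset_normalClosure ⟨x, rfl⟩
    rw [map_mul, map_mul, map_mul, map_inv, map_inv, mul_inv_eq_one] at hr
    have h1 : PresentedGroup.mk (mappingTorusRels ψ) (FreeGroup.of (none : Option Bool)) = τ ψ :=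
      rfl
    have h2 : PresentedGroup.mk (mappingTorusRels ψ) (FreeGroup.of (some x))
        = ι ψ (FreeGroup.of x) := by
      simp [ι, FreeGroup.map.of]
    have h3 : PresentedGroup.mk (mappingTorusRels ψ) (FreeGroup.map some (ψ (FreeGroup.of x)))
        = ι ψ (ψ (FreeGroup.of x)) := rfl
    rw [h1, h2, h3] at hr
    simp [MulAut.conj]
    exact hr
  have := FreeGroup.ext_hom _ _ hgen
  have h := congrFun (congrArg (fun (F : FreeGroup Bool →* MappingTorus ψ) => ⇑F) this) g
  simp [MulAut.conj] at h
  exact h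

lemma hrelpow (i : ℕ) (g : FreeGroup Bool) :
    ι ψ ((ψ ^ i) g) = ((τ ψ) ^ i)⁻¹ * ι ψ g * (τ ψ) ^ i := by
  induction i generalizing g with
  | zero => simp
  | succ i ih =>
    have h1 : (ψ ^ (i + 1)) g = (ψ ^ i) (ψ g) := by rw [pow_succ]; rfl
    rw [h1, ih (ψ g), ← hrel ψ g]
    group

noncomputable def θ : Multiplicative ℤ →* MulAut (Colim ψ) := zpowersHom _ (Colim.shift ψ)

abbrev TT := SemidirectProduct (Colim ψ) (Multiplicative ℤ) (θ ψ)

noncomputable def ff : Option Bool → TT ψ := fun o =>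
  o.elim (inr (ofAdd 1)) fun x => inl (Colim.j ψ (FreeGroup.of x))

lemma lift_ff_map_some (g : FreeGroup Bool) :
    FreeGroup.lift (ff ψ) (FreeGroup.map some g) = inl (Colim.j ψ g) := by
  have : (FreeGroup.lift (ff ψ)).comp (FreeGroup.map some)
      = (inl (φ := θ ψ)).comp (Colim.j ψ) := by
    apply FreeGroup.ext_hom
    intro x
    simp [ff, FreeGroup.map.of, FreeGroup.lift_apply_of]
  exact congrFun (congrArg (fun (F : FreeGroup Bool →* TT ψ) => ⇑F) this) g

lemma hrelT : ∀ r ∈ mappingTorusRels ψ, FreeGroup.lift (ff ψ) r = 1 := by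
  rintro r ⟨x, rfl⟩
  rw [map_mul, map_mul, map_mul, map_inv, map_inv, mul_inv_eq_one, lift_ff_map_some]
  rw [FreeGroup.lift_apply_of, FreeGroup.lift_apply_of]
  show (ff ψ none)⁻¹ * inl (Colim.j ψ (FreeGroup.of x)) * ff ψ none = _
  have key : ((θ ψ (ofAdd 1))⁻¹) (Colim.j ψ (FreeGroup.of x))
      = Colim.j ψ (ψ (FreeGroup.of x)) := by
    have h1 : θ ψ (ofAdd 1) = Colim.shift ψ := by
      simp [θ, zpowersHom_apply]
    rw [h1, MulAut.inv_def]
    exact Colim.shift_symm_j ψ _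
  show (inr (ofAdd 1))⁻¹ * inl (Colim.j ψ (FreeGroup.of x)) * inr (ofAdd 1) = _
  rw [← map_inv, ← SemidirectProduct.inl_aut_inv, key]
  rfl

noncomputable def Phi : MappingTorus ψ →* TT ψ := PresentedGroup.toGroup (hrelT ψ)

lemma Phi_tau : Phi ψ (τ ψ) = inr (ofAdd 1) := PresentedGroup.toGroup.of _

lemma Phi_iota (g : FreeGroup Bool) : Phi ψ (ι ψ g) = inl (Colim.j ψ g) := by
  have : (Phi ψ).comp (ι ψ) = (inl (φ := θ ψ)).comp (Colim.j ψ) := by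
    apply FreeGroup.ext_hom
    intro x
    have h2 : ι ψ (FreeGroup.of x) = PresentedGroup.of (rels := mappingTorusRels ψ) (some x) := by
      simp [ι, FreeGroup.map.of]
      rfl
    simp only [MonoidHom.comp_apply, h2]
    rw [Phi]
    rw [PresentedGroup.toGroup.of]
    rfl
  exact congrFun (congrArg (fun (F : FreeGroup Bool →* TT ψ) => ⇑F) this) g

end MT

end MT9

open MT9 MT9.Colim SemidirectProduct Multiplicative

theorem stmt9 (ψ : Monoid.End (FreeGroup Bool)) (k : ℕ) (hk : k ≠ 0)
    (w : FreeGroup Bool) (hw : w ≠ 1) (hconj : IsConj ((ψ ^ k) w) w) :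
    ∃ H : Subgroup (MappingTorus ψ), Nonempty (H ≃* Multiplicative (ℤ × ℤ)) := by
  classical
  -- `ψ^p w` is never trivial
  have hconjpow : ∀ j : ℕ, IsConj ((ψ ^ (j * k)) w) w := by
    intro j
    induction j with
    | zero => simpa using IsConj.refl w
    | succ j ih =>
      have h1 : (ψ ^ ((j + 1) * k)) w = (ψ ^ (j * k)) ((ψ ^ k) w) := by
        rw [endpow]
        exact pcongr ψ w (by ring)
      rw [h1]
      exact (((ψ ^ (j * k)) : FreeGroup Bool →* FreeGroup Bool).map_isConj hconj).trans ih
  have hψw : ∀ p : ℕ, (ψ ^ p) w ≠ 1 := by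
    intro p hp1
    have h2 := hconjpow (p + 1)
    have h3 : (ψ ^ ((p + 1) * k)) w = 1 := by
      have hpk : p ≤ (p + 1) * k :=
        le_trans (Nat.le_succ p) (Nat.le_mul_of_pos_right _ (Nat.pos_of_ne_zero hk))
      have he : (p + 1) * k = ((p + 1) * k - p) + p := (Nat.sub_add_cancel hpk).symm
      rw [he, ← endpow, hp1, map_one]
    rw [h3] at h2
    exact hw (isConj_one_right.1 h2)
  obtain ⟨c, hc⟩ := isConj_iff.1 hconj
  set u : MappingTorus ψ := (τ ψ) ^ k * (ι ψ c)⁻¹ with hu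
  set v : MappingTorus ψ := ι ψ w with hv
  have hcM : ι ψ c * ι ψ ((ψ ^ k) w) * (ι ψ c)⁻¹ = v := by
    rw [← map_inv, ← map_mul, ← map_mul, hc]
  have hkey : v = ι ψ c * (((τ ψ) ^ k)⁻¹ * v * (τ ψ) ^ k) * (ι ψ c)⁻¹ := by
    rw [← hrelpow ψ k w, hcM]
  have h2 : (ι ψ c)⁻¹ * v * ι ψ c = ((τ ψ) ^ k)⁻¹ * v * (τ ψ) ^ k := by
    conv_lhs => rw [hkey]
    group
  have huv : Commute u v := by
    show u * v = v * u
    rw [hu]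
    calc (τ ψ) ^ k * (ι ψ c)⁻¹ * v
        = (τ ψ) ^ k * ((ι ψ c)⁻¹ * v * ι ψ c) * (ι ψ c)⁻¹ := by group
      _ = (τ ψ) ^ k * (((τ ψ) ^ k)⁻¹ * v * (τ ψ) ^ k) * (ι ψ c)⁻¹ := by rw [h2]
      _ = v * ((τ ψ) ^ k * (ι ψ c)⁻¹) := by group
  -- build the homomorphism from ℤ²
  let Ψ : Multiplicative (ℤ × ℤ) →* MappingTorus ψ :=
  { toFun := fun q => u ^ (toAdd q).1 * v ^ (toAdd q).2
    map_one' := by simp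
    map_mul' := fun q r => by
      simp only [toAdd_mul, Prod.fst_add, Prod.snd_add]
      rw [zpow_add, zpow_add]
      exact (huv.zpow_zpow _ _).mul_mul_mul_comm _ _ }
  have hΨ : ∀ q : Multiplicative (ℤ × ℤ), Ψ q = u ^ (toAdd q).1 * v ^ (toAdd q).2 := fun _ => rfl
  have hinj : Function.Injective Ψ := by
    refine (injective_iff_map_eq_one Ψ).2 ?_
    intro q hq
    rw [hΨ] at hq
    set a := (toAdd q).1 with ha
    set b := (toAdd q).2 with hb
    -- first coordinate
    have hΦu : rightHom (Phi ψ u) = ofAdd (k : ℤ) := by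
      rw [hu, map_mul, map_pow, map_inv, Phi_tau, Phi_iota, map_mul, map_pow, map_inv,
        rightHom_inr, rightHom_inl, inv_one, mul_one]
      rw [← ofAdd_nsmul]
      simp
    have hΦv : rightHom (Phi ψ v) = 1 := by
      rw [hv, Phi_iota, rightHom_inl]
    have h1 : rightHom (Phi ψ (u ^ a * v ^ b)) = 1 := by rw [hq]; simp
    simp only [map_mul, map_zpow, hΦu, hΦv, one_zpow, mul_one] at h1
    have ha0 : a = 0 := by
      have h2 := congrArg toAdd h1
      simp only [one_zpow, mul_one, toAdd_mul, toAdd_zpow, toAdd_ofAdd, toAdd_one, smul_eq_mul] at h2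
      have : (k : ℤ) ≠ 0 := Int.natCast_ne_zero.2 hk
      exact (mul_eq_zero.1 h2).resolve_right this
    rw [ha0, zpow_zero, one_mul] at hq
    -- second coordinate
    have hjb : Colim.j ψ (w ^ b) = 1 := by
      have h3 : Phi ψ (v ^ b) = 1 := by rw [hq, map_one]
      rw [hv, map_zpow, Phi_iota, ← map_zpow, ← map_zpow] at h3
      exact inl_injective (h3.trans (map_one inl).symm)
    obtain ⟨p, hp⟩ := Colim.j_eq_one ψ hjb
    rw [map_zpow] at hp
    have hb0 : b = 0 := MT9.zpow_eq_zero (hψw p) hp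
    show q = 1
    have : toAdd q = 0 := Prod.ext ha0 hb0
    rw [← ofAdd_toAdd q, this, ofAdd_zero]
  exact ⟨Ψ.range, ⟨(MonoidHom.ofInjective hinj).symm⟩⟩
end

section
/- Let ψ : F(a,b) → F(a,b) be an endomorphism satisfying ψ(a) = P⁻¹aP and ψ(b) = Q for given words P, Q, and let Z := PQP⁻¹ and φ_Z be the endomorphism a ↦ a, b ↦ Z. Then there exist W ∈ F(a,b) and k ∈ ℤ with P = φ_Z(W) a^k W⁻¹ if and only if the conjugacy class of a contains a fixed point of ψ. Moreover, if P = φ_Z(W) a^k W⁻¹ then W a W⁻¹ is fixed by ψ. -/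
/-- The endomorphism `φ_Z` of `F(a,b)` with `a ↦ a`, `b ↦ Z`
(here `a := of false`, `b := of true`). -/
def phiZ (Z : FreeGroup Bool) : FreeGroup Bool →* FreeGroup Bool :=
  FreeGroup.lift fun t : Bool => if t then Z else FreeGroup.of false



namespace MyAux
open FreeGroup

variable {α : Type*} [DecidableEq α]

lemma reduce_cons_cancel {x : α} {b : Bool} {t : List (α × Bool)}
    (h : reduce ((x, !b) :: t) = (x, !b) :: t) :
    reduce ((x, b) :: (x, !b) :: t) = t := by
  rw [reduce.cons, h]
  simp

lemma reduce_cons_of_ne {x : α} {b : Bool} {L : List (α × Bool)}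
    (hred : reduce L = L) (hhead : L.head? ≠ some (x, !b)) :
    reduce ((x, b) :: L) = (x, b) :: L := by
  cases L with
  | nil => rfl
  | cons y t =>
    rw [reduce.cons, hred]
    obtain ⟨y1, y2⟩ := y
    by_cases hc : x = y1 ∧ b = !y2
    · exfalso; apply hhead
      obtain ⟨h1, h2⟩ := hc
      subst h1
      have : y2 = !b := by subst h2; simp
      simp [this]
    · simp [hc]

lemma toWord_consMul {x : α} {b : Bool} {g : FreeGroup α} {t : List (α × Bool)}
    (hL : g.toWord = (x, !b) :: t) : (mk [(x, b)] * g).toWord = t := by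
  conv_lhs => rw [← mk_toWord (x := g)]
  rw [mul_mk, List.singleton_append, toWord_mk, hL]
  exact reduce_cons_cancel (by rw [← hL]; exact reduce_toWord g)

lemma toWord_consMul_ne {x : α} {b : Bool} {g : FreeGroup α}
    (hhead : g.toWord.head? ≠ some (x, !b)) :
    (mk [(x, b)] * g).toWord = (x, b) :: g.toWord := by
  conv_lhs => rw [← mk_toWord (x := g)]
  rw [mul_mk, List.singleton_append, toWord_mk]
  exact reduce_cons_of_ne (reduce_toWord g) hhead

omit [DecidableEq α] in
lemma of_eq_mk (x : α) : (FreeGroup.of x : FreeGroup α) = mk [(x, true)] := rfl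

lemma inv_of_eq_mk (x : α) : (FreeGroup.of x : FreeGroup α)⁻¹ = mk [(x, false)] := by
  rw [of_eq_mk, inv_mk]
  rfl

omit [DecidableEq α] in
lemma invRev_cons (x : α × Bool) (L : List (α × Bool)) :
    invRev (x :: L) = invRev L ++ [(x.1, !x.2)] := by
  simp [invRev]

-- centralizer of a generator
lemma commute_of_aux : ∀ (n : ℕ) (g : FreeGroup Bool), g.norm = n →
    g * FreeGroup.of false = FreeGroup.of false * g →
    ∃ k : ℤ, g = FreeGroup.of false ^ k := by
  intro n
  induction n using Nat.strong_induction_on with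
  | _ n ih =>
  intro g hn hcomm
  set a : FreeGroup Bool := FreeGroup.of false with ha
  cases hL : g.toWord with
  | nil =>
    exact ⟨0, by simp [toWord_eq_nil_iff.1 hL]⟩
  | cons hd t =>
    obtain ⟨x, b⟩ := hd
    cases x
    · -- first letter is a^{±1}
      cases b
      · -- first letter a⁻¹ : consider a * g
        have h1 : (a * g).toWord = t := by
          rw [ha, of_eq_mk]
          exact toWord_consMul (b := true) (by simpa using hL)
        have hlt : (a * g).norm < n := by
          rw [FreeGroup.norm, h1, ← hn, FreeGroup.norm, hL]; simp
        have hc : (a * g) * a = a * (a * g) := by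
          rw [mul_assoc, hcomm]
        obtain ⟨k, hk⟩ := ih _ hlt (a * g) rfl hc
        refine ⟨k - 1, ?_⟩
        have : g = a⁻¹ * (a * g) := by group
        rw [this, hk]
        group
      · -- first letter a : consider a⁻¹ * g
        have h1 : (a⁻¹ * g).toWord = t := by
          rw [ha, inv_of_eq_mk]
          exact toWord_consMul (b := false) (by simpa using hL)
        have hlt : (a⁻¹ * g).norm < n := by
          rw [FreeGroup.norm, h1, ← hn, FreeGroup.norm, hL]; simp
        have hc : (a⁻¹ * g) * a = a * (a⁻¹ * g) := by
          rw [mul_assoc, hcomm]; group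
        obtain ⟨k, hk⟩ := ih _ hlt (a⁻¹ * g) rfl hc
        refine ⟨k + 1, ?_⟩
        have : g = a * (a⁻¹ * g) := by group
        rw [this, hk]
        group
    · -- first letter is b^{±1} : look at first letter of g⁻¹
      have hcomm' : g⁻¹ * a = a * g⁻¹ := by
        have := congrArg (fun z => g⁻¹ * z * g⁻¹) hcomm
        simpa [mul_assoc] using this.symm
      cases hM : g⁻¹.toWord with
      | nil =>
        exfalso
        have : g⁻¹ = 1 := toWord_eq_nil_iff.1 hM
        have : g = 1 := by simpa using congrArg (·⁻¹) this
        rw [this] at hL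
        simp [toWord_one] at hL
      | cons hd' t' =>
        obtain ⟨y, c⟩ := hd'
        cases y
        · -- first letter of g⁻¹ is a^{±1}
          cases c
          · have h1 : (a * g⁻¹).toWord = t' := by
              rw [ha, of_eq_mk]
              exact toWord_consMul (b := true) (by simpa using hM)
            have hlt : (a * g⁻¹).norm < n := by
              rw [FreeGroup.norm, h1, ← hn]
              have : g.norm = g⁻¹.norm := norm_inv_eq.symm
              rw [this, FreeGroup.norm, hM]; simp
            have hc : (a * g⁻¹) * a = a * (a * g⁻¹) := by
              rw [mul_assoc, hcomm']
            obtain ⟨k, hk⟩ := ih _ hlt (a * g⁻¹) rfl hc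
            refine ⟨1 - k, ?_⟩
            have : g = (a⁻¹ * (a * g⁻¹))⁻¹ := by group
            rw [this, hk]
            group
          · have h1 : (a⁻¹ * g⁻¹).toWord = t' := by
              rw [ha, inv_of_eq_mk]
              exact toWord_consMul (b := false) (by simpa using hM)
            have hlt : (a⁻¹ * g⁻¹).norm < n := by
              rw [FreeGroup.norm, h1, ← hn]
              have : g.norm = g⁻¹.norm := norm_inv_eq.symm
              rw [this, FreeGroup.norm, hM]; simp
            have hc : (a⁻¹ * g⁻¹) * a = a * (a⁻¹ * g⁻¹) := by
              rw [mul_assoc, hcomm']; group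
            obtain ⟨k, hk⟩ := ih _ hlt (a⁻¹ * g⁻¹) rfl hc
            refine ⟨-(k + 1), ?_⟩
            have : g = (a * (a⁻¹ * g⁻¹))⁻¹ := by group
            rw [this, hk]
            group
        · -- first letters of g and g⁻¹ are both b^{±1} : contradiction
          exfalso
          have hag : (a * g).toWord = (false, true) :: g.toWord := by
            rw [ha, of_eq_mk]
            refine toWord_consMul_ne ?_
            rw [hL]; simp
          have hig : (a⁻¹ * g⁻¹).toWord = (false, false) :: g⁻¹.toWord := by
            rw [ha, inv_of_eq_mk]
            refine toWord_consMul_ne ?_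
            rw [hM]; simp
          have hga : (g * a).toWord = g.toWord ++ [(false, true)] := by
            have e1 : g * a = (a⁻¹ * g⁻¹)⁻¹ := by group
            rw [e1, toWord_inv, hig, invRev_cons, ← toWord_inv]
            simp [invRev_invRev, toWord_inv]
          have : g.toWord ++ [(false, true)] = (false, true) :: g.toWord := by
            rw [← hga, ← hag, hcomm]
          rw [hL] at this
          simp at this

lemma commute_of {g : FreeGroup Bool}
    (h : g * FreeGroup.of false = FreeGroup.of false * g) :
    ∃ k : ℤ, g = FreeGroup.of false ^ k :=
  commute_of_aux g.norm g rfl h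

end MyAux

theorem stmt12 (ψ : FreeGroup Bool →* FreeGroup Bool) (P Q : FreeGroup Bool)
    (hA : ψ (FreeGroup.of false) = P⁻¹ * FreeGroup.of false * P)
    (hB : ψ (FreeGroup.of true) = Q) :
    ((∃ (W : FreeGroup Bool) (k : ℤ),
        P = phiZ (P * Q * P⁻¹) W * (FreeGroup.of false) ^ k * W⁻¹) ↔
      (∃ x : FreeGroup Bool, IsConj (FreeGroup.of false) x ∧ ψ x = x)) ∧
    ∀ (W : FreeGroup Bool) (k : ℤ),
      P = phiZ (P * Q * P⁻¹) W * (FreeGroup.of false) ^ k * W⁻¹ →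
        ψ (W * FreeGroup.of false * W⁻¹) = W * FreeGroup.of false * W⁻¹ := by
  set a : FreeGroup Bool := FreeGroup.of false with ha
  set Z : FreeGroup Bool := P * Q * P⁻¹ with hZ
  have hphi_a : phiZ Z a = a := by simp [phiZ, ha]
  have hphi_b : phiZ Z (FreeGroup.of true) = Z := by simp [phiZ]
  have key : ∀ w, ψ w = P⁻¹ * phiZ Z w * P := by
    have : ψ = (MulAut.conj P⁻¹).toMonoidHom.comp (phiZ Z) := by
      apply FreeGroup.ext_hom
      intro x
      cases x <;>
        simp only [MonoidHom.coe_comp, MulEquiv.coe_toMonoidHom,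
          Function.comp_apply, MulAut.conj_apply, inv_inv]
      · rw [← ha, hA, hphi_a]
      · rw [hB, hphi_b, hZ]; group
    intro w
    rw [this]
    simp [MulAut.conj_apply]
  have part2 : ∀ (W : FreeGroup Bool) (k : ℤ),
      P = phiZ Z W * a ^ k * W⁻¹ → ψ (W * a * W⁻¹) = W * a * W⁻¹ := by
    intro W k hP
    rw [key, map_mul, map_mul, map_inv, hphi_a, hP]
    group
  refine ⟨⟨?_, ?_⟩, part2⟩
  · rintro ⟨W, k, hP⟩
    exact ⟨W * a * W⁻¹, isConj_iff.2 ⟨W, rfl⟩, part2 W k hP⟩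
  · rintro ⟨x, hconj, hfix⟩
    obtain ⟨V, hV⟩ := isConj_iff.1 hconj
    rw [← hV, key, map_mul, map_mul, map_inv, hphi_a] at hfix
    set φV := phiZ Z V with hφV
    have h2 : P⁻¹ * φV * a = (V * a * V⁻¹) * (P⁻¹ * φV) := by
      rw [← hfix]; group
    have hcomm : (V⁻¹ * P⁻¹ * φV) * a = a * (V⁻¹ * P⁻¹ * φV) := by
      rw [show (V⁻¹ * P⁻¹ * φV) * a = V⁻¹ * (P⁻¹ * φV * a) by group, h2]
      group
    obtain ⟨m, hm⟩ := MyAux.commute_of hcomm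
    refine ⟨V, -m, ?_⟩
    have hPinv : P⁻¹ = V * a ^ m * φV⁻¹ := by
      rw [← hm]; group
    rw [← inv_inv P, hPinv]
    group
    rfl
end
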